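/- Suppose nonnegative sequences (μ_ℓ), (e_ℓ) satisfy: (estimator reduction) μ_{ℓ+1}² + K₁(1−q) e_{ℓ+1}² ≤ ρ₁ μ_ℓ² + K₁(1+q) e_ℓ² for constants ρ₁ ∈ (0,1), K₁ > 0, q ∈ [0, 1/2); and (reliability) e_ℓ² ≤ C_rel² μ_ℓ². Then for every ε ∈ (0,1) with ρ₂ := max{ρ₁ + ε C_rel² K₁, (1−ε+q)/(1−q)} < 1, the quantity ξ_ℓ² := μ_ℓ² + β e_ℓ² with β = K₁(1−q) satisfies ξ_{ℓ+1}² ≤ ρ₂ ξ_ℓ². -/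
import Mathlib


/-- abstract contraction, Proposition 5.9. -/
theorem stmt_10 (μ e : ℕ → ℝ) (hμ : ∀ ℓ, 0 ≤ μ ℓ) (he : ∀ ℓ, 0 ≤ e ℓ)
    (ρ₁ K₁ q Crel ε : ℝ)
    (hρ₁ : ρ₁ ∈ Set.Ioo (0 : ℝ) 1) (hK₁ : 0 < K₁)
    (hq : q ∈ Set.Ico (0 : ℝ) (1 / 2))
    (hred : ∀ ℓ, μ (ℓ + 1) ^ 2 + K₁ * (1 - q) * e (ℓ + 1) ^ 2
        ≤ ρ₁ * μ ℓ ^ 2 + K₁ * (1 + q) * e ℓ ^ 2)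
    (hrel : ∀ ℓ, e ℓ ^ 2 ≤ Crel ^ 2 * μ ℓ ^ 2)
    (hε : ε ∈ Set.Ioo (0 : ℝ) 1)
    (ρ₂ : ℝ)
    (hρ₂ : ρ₂ = max (ρ₁ + ε * Crel ^ 2 * K₁) ((1 - ε + q) / (1 - q)))
    (hρ₂lt : ρ₂ < 1)
    (β : ℝ) (hβ : β = K₁ * (1 - q))
    (ξ : ℕ → ℝ) (hξ : ∀ ℓ, ξ ℓ ^ 2 = μ ℓ ^ 2 + β * e ℓ ^ 2) :
    ∀ ℓ, ξ (ℓ + 1) ^ 2 ≤ ρ₂ * ξ ℓ ^ 2 := by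
  intro ℓ
  have hq1 : 0 < 1 - q := by linarith [hq.2]
  have hA : ρ₁ + ε * Crel ^ 2 * K₁ ≤ ρ₂ := hρ₂ ▸ le_max_left _ _
  have hB : (1 - ε + q) / (1 - q) ≤ ρ₂ := hρ₂ ▸ le_max_right _ _
  have hB' : 1 - ε + q ≤ ρ₂ * (1 - q) := by
    rw [div_le_iff₀ hq1] at hB; linarith
  have h1 := hred ℓ
  have h2 := hrel ℓ
  have hμ2 : 0 ≤ μ ℓ ^ 2 := sq_nonneg _
  have he2 : 0 ≤ e ℓ ^ 2 := sq_nonneg _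
  rw [hξ, hξ, hβ]
  nlinarith [mul_le_mul_of_nonneg_left h2 (le_of_lt (mul_pos hε.1 hK₁)),
    mul_le_mul_of_nonneg_right hB' (mul_nonneg hK₁.le he2)]
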